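/- Let (X,x), (Y,y), (T,t) be pointed schemes of finite type over ℤ. Suppose there exist pointed schemes (Z,z) and (V,v) of finite type over ℤ together with smooth morphisms Z → X and Z → Y sending the point z to x and to y respectively, and smooth morphisms V → Y and V → T sending the point v to y and to t respectively. Then there exists a pointed scheme (W,w) of finite type over ℤ together with smooth morphisms W → X and W → T sending the point w to x and to t respectively. (Consequently, smooth equivalence of pointed schemes is a transitive relation.) -/

import Mathlib

open AlgebraicGeometry CategoryTheory CategoryTheory.Limits

/-- A scheme is of finite type over ℤ iff its (unique) morphism to the terminal
scheme `Spec ℤ` is locally of finite type and quasi-compact. -/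
def FiniteTypeOverInt (X : Scheme) : Prop :=
  LocallyOfFiniteType (terminal.from X) ∧ QuasiCompact (terminal.from X)

universe u

lemma auxNoetherianOfFiniteType {R S : CommRingCat} (hR : IsNoetherianRing R) {φ : R ⟶ S}
    (h : RingHom.FiniteType φ.hom) : IsNoetherianRing S := by
  letI := φ.hom.toAlgebra
  haveI := hR
  haveI : Algebra.FiniteType R S := h
  exact Algebra.FiniteType.isNoetherianRing R S

/-- `Spec (ULift ℤ)` is terminal in `Scheme.{u}`. -/
noncomputable def specULiftZIsTerminal : IsTerminal (Spec (CommRingCat.of (ULift.{u} ℤ))) :=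
  @IsTerminal.isTerminalObj _ _ _ _ Scheme.Spec _ inferInstance
    (terminalOpOfInitial CommRingCat.isInitial)

lemma noetherianSpace_of_finiteTypeOverInt (X : Scheme.{u}) (h : FiniteTypeOverInt X) :
    TopologicalSpace.NoetherianSpace X := by
  haveI : CompactSpace X := (AlgebraicGeometry.compactSpace_iff_quasiCompact X).mpr h.2
  haveI : IsNoetherianRing (ULift.{u} ℤ) :=
    isNoetherianRing_of_ringEquiv ℤ ULift.ringEquiv.symm
  haveI : IsNoetherianRing ↑(CommRingCat.of (ULift.{u} ℤ)) :=
    inferInstanceAs (IsNoetherianRing (ULift.{u} ℤ))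
  haveI : IsLocallyNoetherian (⊤_ Scheme.{u}) :=
    isLocallyNoetherian_of_isOpenImmersion (terminalIsoIsTerminal _root_.specULiftZIsTerminal).hom
  haveI : IsLocallyNoetherian X := by
    constructor
    intro U
    have hQ := HasRingHomProperty.appLE (P := @LocallyOfFiniteType)
      (f := terminal.from X) h.1 ⟨⊤, isAffineOpen_top _⟩ U le_top
    exact auxNoetherianOfFiniteType
      (IsLocallyNoetherian.component_noetherian ⟨⊤, isAffineOpen_top _⟩) hQ
  haveI : IsNoetherian X := ⟨⟩
  infer_instance

/-- transitivity of smooth equivalence of pointed schemes of finite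
type over ℤ.  If (X,x) ∼ (Y,y) via (Z,z) and (Y,y) ∼ (T,t) via (V,v), then there
is a pointed scheme (W,w) of finite type over ℤ with smooth morphisms to (X,x)
and (T,t). -/
theorem smooth_equivalence_transitive
    (X Y T : Scheme) (x : X) (y : Y) (t : T)
    (hX : FiniteTypeOverInt X) (hY : FiniteTypeOverInt Y) (hT : FiniteTypeOverInt T)
    (h₁ : ∃ (Z : Scheme) (z : Z) (f : Z ⟶ X) (g : Z ⟶ Y),
      FiniteTypeOverInt Z ∧ IsSmooth f ∧ IsSmooth g ∧ f.base z = x ∧ g.base z = y)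
    (h₂ : ∃ (V : Scheme) (v : V) (f : V ⟶ Y) (g : V ⟶ T),
      FiniteTypeOverInt V ∧ IsSmooth f ∧ IsSmooth g ∧ f.base v = y ∧ g.base v = t) :
    ∃ (W : Scheme) (w : W) (f : W ⟶ X) (g : W ⟶ T),
      FiniteTypeOverInt W ∧ IsSmooth f ∧ IsSmooth g ∧ f.base w = x ∧ g.base w = t := by
  obtain ⟨Z, z, f₁, g₁, hZ, hf₁, hg₁, hfz, hgz⟩ := h₁
  obtain ⟨V, v, f₂, g₂, hV, hf₂, hg₂, hfv, hgv⟩ := h₂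
  haveI := hf₁; haveI := hg₁; haveI := hf₂; haveI := hg₂
  -- the fiber product W = Z ×[Y] V
  obtain ⟨w, hw₁, hw₂⟩ := Scheme.Pullback.exists_preimage_pullback z v
    (by rw [hgz, hfv] : g₁.base z = f₂.base v)
  -- smoothness of the projections
  haveI := isSmooth_isStableUnderBaseChange
  haveI : Smooth f₁ := hf₁; haveI : Smooth g₁ := hg₁; haveI : Smooth f₂ := hf₂; haveI : Smooth g₂ := hg₂
  haveI hsf : Smooth (pullback.fst g₁ f₂) :=
    MorphismProperty.IsStableUnderBaseChange.of_isPullback (P := @Smooth) (IsPullback.of_hasPullback g₁ f₂).flip hf₂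
  haveI hss : Smooth (pullback.snd g₁ f₂) :=
    MorphismProperty.IsStableUnderBaseChange.of_isPullback (P := @Smooth) (IsPullback.of_hasPullback g₁ f₂) hg₁
  refine ⟨pullback g₁ f₂, w, pullback.fst g₁ f₂ ≫ f₁, pullback.snd g₁ f₂ ≫ g₂,
    ⟨?_, ?_⟩, inferInstanceAs (Smooth _), inferInstanceAs (Smooth _), ?_, ?_⟩
  · -- locally of finite type over ℤ
    haveI : LocallyOfFiniteType f₂ := by
      haveI : LocallyOfFiniteType (f₂ ≫ terminal.from Y) := by
        rw [show f₂ ≫ terminal.from Y = terminal.from V from terminal.hom_ext _ _]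
        exact hV.1
      exact locallyOfFiniteType_of_comp f₂ (terminal.from Y)
    haveI : LocallyOfFiniteType (pullback.fst g₁ f₂) :=
      MorphismProperty.IsStableUnderBaseChange.of_isPullback (P := @LocallyOfFiniteType) (IsPullback.of_hasPullback g₁ f₂).flip ‹_›
    haveI := hZ.1
    rw [show terminal.from (pullback g₁ f₂) = pullback.fst g₁ f₂ ≫ terminal.from Z from
      terminal.hom_ext _ _]
    infer_instance
  · -- quasi-compact over ℤ
    haveI : TopologicalSpace.NoetherianSpace V := noetherianSpace_of_finiteTypeOverInt V hV
    haveI : QuasiCompact f₂ := inferInstance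
    haveI : QuasiCompact (pullback.fst g₁ f₂) :=
      MorphismProperty.IsStableUnderBaseChange.of_isPullback (P := @QuasiCompact) (IsPullback.of_hasPullback g₁ f₂).flip ‹_›
    haveI := hZ.2
    rw [show terminal.from (pullback g₁ f₂) = pullback.fst g₁ f₂ ≫ terminal.from Z from
      terminal.hom_ext _ _]
    infer_instance
  · rw [Scheme.Hom.comp_base, TopCat.comp_app, hw₁, hfz]
  · rw [Scheme.Hom.comp_base, TopCat.comp_app, hw₂, hgv]
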